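/- Let (A_n)_{n≥1} be complex numbers and ν a positive integer such that Σ_{n≥1} |A_n| n^ν < ∞. For x > 0 set f(x) = Σ_{n≥1} (Σ_{d ∣ n} A_d μ(n/d)) / (e^{n x} − 1). Then f is ν-times differentiable on (0, ∞) and for every x > 0, f^{(ν)}(x) = Σ_{n≥1} (Σ_{d ∣ n} A_d (−d)^ν μ(n/d)) / (e^{n x} − 1). -/

import Mathlib

open scoped BigOperators

/-! ### Auxiliary lemmas -/

private def mulIdx : ℕ × ℕ → ℕ := fun p => (p.1 + 1) * (p.2 + 1)

/-- Möbius inversion in the form we need. -/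
private lemma moebius_inv_sum (h : ℕ → ℂ) (m : ℕ) (hm : 0 < m) :
    ∑ d ∈ m.divisors,
      (∑ e ∈ d.divisors, h e * ((ArithmeticFunction.moebius (d / e) : ℤ) : ℂ)) = h m := by
  refine (ArithmeticFunction.sum_eq_iff_sum_mul_moebius_eq
      (f := fun d => ∑ e ∈ d.divisors, h e * ((ArithmeticFunction.moebius (d / e) : ℤ) : ℂ))
      (g := h)).mpr ?_ m hm
  intro n hn
  rw [Nat.sum_divisorsAntidiagonal' (f := fun a b =>
    ((ArithmeticFunction.moebius a : ℤ) : ℂ) * h b)]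
  exact Finset.sum_congr rfl fun x _ => by ring

private def fiberEquiv (m : ℕ) : {q : ℕ × ℕ // q ∈ (m + 1).divisorsAntidiagonal} ≃
    (mulIdx ⁻¹' {m + 1} : Set (ℕ × ℕ)) where
  toFun q := ⟨(q.1.1 - 1, q.1.2 - 1), by
    obtain ⟨⟨a, b⟩, hq⟩ := q
    rw [Nat.mem_divisorsAntidiagonal] at hq
    have ha : a ≠ 0 := by rintro rfl; simp at hq
    have hb : b ≠ 0 := by rintro rfl; simp at hq
    simp only [Set.mem_preimage, mulIdx, Set.mem_singleton_iff]
    have h1 : a - 1 + 1 = a := by omega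
    have h2 : b - 1 + 1 = b := by omega
    rw [h1, h2]; exact hq.1⟩
  invFun p := ⟨(p.1.1 + 1, p.1.2 + 1), by
    have hp := p.2
    simp only [Set.mem_preimage, mulIdx, Set.mem_singleton_iff] at hp
    rw [Nat.mem_divisorsAntidiagonal]
    exact ⟨hp, by omega⟩⟩
  left_inv q := by
    obtain ⟨⟨a, b⟩, hq⟩ := q
    rw [Nat.mem_divisorsAntidiagonal] at hq
    have ha : a ≠ 0 := by rintro rfl; simp at hq
    have hb : b ≠ 0 := by rintro rfl; simp at hq
    simp only [Subtype.ext_iff, Prod.ext_iff]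
    omega
  right_inv p := by
    simp [Subtype.ext_iff]

/-- The fiber of `mulIdx` over `m+1` identified with `divisorsAntidiagonal`. -/
private lemma tsum_fiber_eq {M : Type*} [AddCommMonoid M] [TopologicalSpace M] [T2Space M]
    (h : ℕ × ℕ → M) (m : ℕ) :
    ∑' p : (mulIdx ⁻¹' {m + 1} : Set (ℕ × ℕ)), h ↑p
      = ∑ q ∈ (m + 1).divisorsAntidiagonal, h (q.1 - 1, q.2 - 1) := by
  have h2 := Finset.tsum_subtype ((m + 1).divisorsAntidiagonal) (fun q => h (q.1 - 1, q.2 - 1))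
  rw [← h2]
  exact (Equiv.tsum_eq (fiberEquiv m) (fun p => h ↑p)).symm

private lemma hasSum_shift_fiber {M : Type*} [AddCommGroup M] [UniformSpace M]
    [IsUniformAddGroup M] [CompleteSpace M] [T2Space M] (F : ℕ × ℕ → M) (hF : Summable F) :
    HasSum (fun m : ℕ => ∑ q ∈ (m + 1).divisorsAntidiagonal, F (q.1 - 1, q.2 - 1))
      (∑' p : ℕ × ℕ, F p) := by
  have h1 := hF.hasSum.tsum_fiberwise mulIdx
  have h0 : ∑' p : (mulIdx ⁻¹' {0} : Set (ℕ × ℕ)), F ↑p = 0 := by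
    have : (mulIdx ⁻¹' {0} : Set (ℕ × ℕ)) = (∅ : Set (ℕ × ℕ)) := by
      ext ⟨a, b⟩; simp [mulIdx]
    rw [this, tsum_empty]
  have h2 : HasSum (fun m : ℕ => ∑' p : (mulIdx ⁻¹' {m + 1} : Set (ℕ × ℕ)), F ↑p)
      (∑' p : ℕ × ℕ, F p) := by
    refine (hasSum_nat_add_iff
      (f := fun c => ∑' p : (mulIdx ⁻¹' {c} : Set (ℕ × ℕ)), F ↑p) 1).mpr ?_
    simpa [h0] using h1
  simpa only [tsum_fiber_eq] using h2

/-- Regrouping the double series by the value of the product of the indices. -/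
private lemma hasSum_divisors {M : Type*} [CommRing M] [UniformSpace M]
    [IsUniformAddGroup M] [CompleteSpace M] [T2Space M] (B : ℕ → M) (w : M)
    (hF : Summable fun p : ℕ × ℕ => B (p.1 + 1) * w ^ ((p.1 + 1) * (p.2 + 1))) :
    HasSum (fun m : ℕ => (∑ d ∈ (m + 1).divisors, B d) * w ^ (m + 1))
      (∑' p : ℕ × ℕ, B (p.1 + 1) * w ^ ((p.1 + 1) * (p.2 + 1))) := by
  have h := hasSum_shift_fiber _ hF
  have key : ∀ m : ℕ,
      (∑ q ∈ (m + 1).divisorsAntidiagonal,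
        B ((q.1 - 1) + 1) * w ^ (((q.1 - 1) + 1) * ((q.2 - 1) + 1)))
      = (∑ d ∈ (m + 1).divisors, B d) * w ^ (m + 1) := by
    intro m
    have step1 : (∑ q ∈ (m + 1).divisorsAntidiagonal,
        B ((q.1 - 1) + 1) * w ^ (((q.1 - 1) + 1) * ((q.2 - 1) + 1)))
        = ∑ q ∈ (m + 1).divisorsAntidiagonal, B q.1 * w ^ (m + 1) := by
      refine Finset.sum_congr rfl fun q hq => ?_
      have h1 := Nat.mem_divisorsAntidiagonal.mp hq
      have ha : q.1 ≠ 0 := by rintro h; rw [h] at h1; simp at h1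
      have hb : q.2 ≠ 0 := by rintro h; rw [h] at h1; simp at h1
      have e1 : q.1 - 1 + 1 = q.1 := by omega
      have e2 : q.2 - 1 + 1 = q.2 := by omega
      rw [e1, e2, h1.1]
    rw [step1, Nat.sum_divisorsAntidiagonal (f := fun a _ => B a * w ^ (m + 1)),
      ← Finset.sum_mul]
  simpa only [key] using h

private lemma summable_F_real {t : ℝ} (ht0 : 0 < t) (ht1 : t < 1) (B : ℕ → ℝ)
    (hB : Summable fun n : ℕ => B (n + 1) * t ^ (n + 1)) :
    Summable fun p : ℕ × ℕ => B (p.1 + 1) * t ^ ((p.1 + 1) * (p.2 + 1)) := by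
  have hg : Summable fun k : ℕ => t ^ k := summable_geometric_of_lt_one ht0.le ht1
  have hprod : Summable fun p : ℕ × ℕ => |B (p.1 + 1) * t ^ (p.1 + 1)| * t ^ p.2 :=
    hB.abs.mul_of_nonneg hg (fun n => abs_nonneg _) (fun k => by positivity)
  refine Summable.of_norm_bounded hprod fun p => ?_
  obtain ⟨n, k⟩ := p
  have hle : (n + 1) + k ≤ (n + 1) * (k + 1) := by
    have h1 : k ≤ (n + 1) * k := Nat.le_mul_of_pos_left k n.succ_pos
    calc (n + 1) + k ≤ (n + 1) + (n + 1) * k := by omega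
      _ = (n + 1) * (k + 1) := by ring
  have h2 : t ^ ((n + 1) * (k + 1)) ≤ t ^ ((n + 1) + k) :=
    pow_le_pow_of_le_one ht0.le ht1.le hle
  rw [Real.norm_eq_abs, abs_mul, abs_of_pos (pow_pos ht0 _), abs_mul,
    abs_of_pos (pow_pos ht0 _), mul_assoc]
  refine mul_le_mul_of_nonneg_left ?_ (abs_nonneg _)
  rw [← pow_add]
  exact h2

private lemma summable_F_complex {t : ℝ} (ht0 : 0 < t) (ht1 : t < 1) (C : ℕ → ℂ)
    (hC : Summable fun n : ℕ => ‖C (n + 1)‖ * t ^ (n + 1)) :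
    Summable fun p : ℕ × ℕ => C (p.1 + 1) * (t : ℂ) ^ ((p.1 + 1) * (p.2 + 1)) := by
  have h := summable_F_real ht0 ht1 (fun n => ‖C n‖) hC
  refine Summable.of_norm_bounded h fun p => le_of_eq ?_
  rw [norm_mul, norm_pow, Complex.norm_real, Real.norm_eq_abs, abs_of_pos ht0]

private lemma lambert_eq {t : ℝ} (ht0 : 0 < t) (ht1 : t < 1) (C : ℕ → ℂ)
    (hC : Summable fun n : ℕ => ‖C (n + 1)‖ * t ^ (n + 1)) :
    ∑' n : ℕ, C (n + 1) * (t : ℂ) ^ (n + 1) / (1 - (t : ℂ) ^ (n + 1))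
      = ∑' m : ℕ, (∑ d ∈ (m + 1).divisors, C d) * (t : ℂ) ^ (m + 1) := by
  have hF := summable_F_complex ht0 ht1 C hC
  have hdiv := hasSum_divisors C ((t : ℂ)) hF
  have hTnorm : ∀ n : ℕ, ‖(t : ℂ) ^ (n + 1)‖ < 1 := by
    intro n
    rw [norm_pow, Complex.norm_real, Real.norm_eq_abs, abs_of_pos ht0]
    exact pow_lt_one₀ ht0.le ht1 n.succ_ne_zero
  have hgeo : ∀ n : ℕ, HasSum (fun k : ℕ => C (n + 1) * (t : ℂ) ^ ((n + 1) * (k + 1)))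
      (C (n + 1) * (t : ℂ) ^ (n + 1) / (1 - (t : ℂ) ^ (n + 1))) := by
    intro n
    have h := (hasSum_geometric_of_norm_lt_one (hTnorm n)).mul_left
      (C (n + 1) * (t : ℂ) ^ (n + 1))
    have harg : (fun k : ℕ => C (n + 1) * (t : ℂ) ^ (n + 1) * ((t : ℂ) ^ (n + 1)) ^ k)
        = fun k : ℕ => C (n + 1) * (t : ℂ) ^ ((n + 1) * (k + 1)) := by
      funext k
      rw [mul_assoc, ← pow_mul, ← pow_add]
      congr 2
      ring
    rw [harg] at h
    rw [div_eq_mul_inv]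
    exact h
  calc ∑' n : ℕ, C (n + 1) * (t : ℂ) ^ (n + 1) / (1 - (t : ℂ) ^ (n + 1))
      = ∑' n : ℕ, ∑' k : ℕ, C (n + 1) * (t : ℂ) ^ ((n + 1) * (k + 1)) :=
        tsum_congr fun n => (hgeo n).tsum_eq.symm
    _ = ∑' p : ℕ × ℕ, C (p.1 + 1) * (t : ℂ) ^ ((p.1 + 1) * (p.2 + 1)) := (Summable.tsum_prod hF).symm
    _ = ∑' m : ℕ, (∑ d ∈ (m + 1).divisors, C d) * (t : ℂ) ^ (m + 1) := hdiv.tsum_eq.symm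

private lemma term_eq (c : ℂ) (n : ℕ) {x : ℝ} (hx : 0 < x) :
    c / (Complex.exp (((n : ℝ) + 1) * x) - 1)
      = c * ((Real.exp (-x) : ℝ) : ℂ) ^ (n + 1) / (1 - ((Real.exp (-x) : ℝ) : ℂ) ^ (n + 1)) := by
  set s : ℝ := Real.exp (((n : ℝ) + 1) * x) with hs
  have hs1 : 1 < s := by
    have h := Real.exp_lt_exp.mpr (show (0 : ℝ) < ((n : ℝ) + 1) * x by positivity)
    rwa [Real.exp_zero] at h
  have hTeq : ((Real.exp (-x) : ℝ) : ℂ) ^ (n + 1) = ((s⁻¹ : ℝ) : ℂ) := by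
    rw [← Complex.ofReal_pow]
    congr 1
    rw [← Real.exp_nat_mul, ← Real.exp_neg]
    congr 1
    push_cast
    ring
  have hsC : Complex.exp (((n : ℝ) + 1) * x) = ((s : ℝ) : ℂ) := by
    rw [hs, Complex.ofReal_exp]
    congr 1
    push_cast
    ring
  rw [hsC, hTeq, Complex.ofReal_inv]
  have h0 : (s : ℂ) ≠ 0 := Complex.ofReal_ne_zero.mpr (by positivity)
  have h1 : (s : ℂ) - 1 ≠ 0 := by
    rw [sub_ne_zero]
    exact_mod_cast ne_of_gt hs1
  have hslt : (s⁻¹ : ℝ) < 1 := inv_lt_one_of_one_lt₀ hs1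
  have h2 : 1 - ((s : ℂ))⁻¹ ≠ 0 := by
    rw [sub_ne_zero, ← Complex.ofReal_inv, ← Complex.ofReal_one, Ne, Complex.ofReal_inj]
    intro hcon
    linarith
  field_simp

/-! ### The exponential series and its derivatives -/

private noncomputable def gSer (A : ℕ → ℂ) (j : ℕ) (x : ℝ) : ℂ :=
  ∑' m : ℕ, A (m + 1) * (-((m : ℂ) + 1)) ^ j * Complex.exp (-((m : ℂ) + 1) * x)

private lemma term_hasDerivAt (A : ℕ → ℂ) (j m : ℕ) (x : ℝ) :
    HasDerivAt (fun y : ℝ => A (m + 1) * (-((m : ℂ) + 1)) ^ j * Complex.exp (-((m : ℂ) + 1) * y))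
      (A (m + 1) * (-((m : ℂ) + 1)) ^ (j + 1) * Complex.exp (-((m : ℂ) + 1) * x)) x := by
  have h1 : HasDerivAt (fun z : ℂ => Complex.exp (-((m : ℂ) + 1) * z))
      (Complex.exp (-((m : ℂ) + 1) * ((x : ℝ) : ℂ)) * (-((m : ℂ) + 1) * 1)) ((x : ℝ) : ℂ) :=
    ((hasDerivAt_id ((x : ℝ) : ℂ)).const_mul (-((m : ℂ) + 1))).cexp
  have h2 := (h1.comp_ofReal).const_mul (A (m + 1) * (-((m : ℂ) + 1)) ^ j)
  exact h2.congr_deriv (by ring)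

private lemma term_norm_le (A : ℕ → ℂ) (ν : ℕ) {j : ℕ} (hj : j ≤ ν) (m : ℕ) {x : ℝ}
    (hx : 0 ≤ x) :
    ‖A (m + 1) * (-((m : ℂ) + 1)) ^ j * Complex.exp (-((m : ℂ) + 1) * x)‖
      ≤ ‖A (m + 1)‖ * ((m : ℝ) + 1) ^ ν := by
  have hc : ‖(-((m : ℂ) + 1))‖ = (m : ℝ) + 1 := by
    rw [norm_neg]
    have h : ((m : ℂ) + 1) = ((((m : ℝ) + 1) : ℝ) : ℂ) := by push_cast; ring
    rw [h, Complex.norm_real, Real.norm_eq_abs, abs_of_pos (by positivity)]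
  have hexp : ‖Complex.exp (-((m : ℂ) + 1) * x)‖ ≤ 1 := by
    have harg : -((m : ℂ) + 1) * (x : ℝ) = (((-(((m : ℝ) + 1) * x)) : ℝ) : ℂ) := by
      push_cast; ring
    rw [harg, ← Complex.ofReal_exp, Complex.norm_real, Real.norm_eq_abs,
      abs_of_pos (Real.exp_pos _)]
    have h := Real.exp_le_exp.mpr (show -(((m : ℝ) + 1) * x) ≤ 0 by
      simp only [neg_nonpos]; positivity)
    rwa [Real.exp_zero] at h
  rw [norm_mul, norm_mul, norm_pow, hc]
  have h1 : ((m : ℝ) + 1) ^ j ≤ ((m : ℝ) + 1) ^ ν :=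
    pow_le_pow_right₀ (by simp [Nat.cast_nonneg]) hj
  calc ‖A (m + 1)‖ * ((m : ℝ) + 1) ^ j * ‖Complex.exp (-((m : ℂ) + 1) * (x : ℝ))‖
      ≤ ‖A (m + 1)‖ * ((m : ℝ) + 1) ^ ν * 1 := by
        refine mul_le_mul (mul_le_mul_of_nonneg_left h1 (norm_nonneg _)) hexp
          (norm_nonneg _) (by positivity)
    _ = ‖A (m + 1)‖ * ((m : ℝ) + 1) ^ ν := mul_one _

private lemma term_summable (A : ℕ → ℂ) (ν : ℕ)
    (hA : Summable fun n : ℕ => ‖A (n + 1)‖ * ((n : ℝ) + 1) ^ ν) {j : ℕ} (hj : j ≤ ν)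
    {x : ℝ} (hx : 0 ≤ x) :
    Summable fun m : ℕ =>
      A (m + 1) * (-((m : ℂ) + 1)) ^ j * Complex.exp (-((m : ℂ) + 1) * x) :=
  Summable.of_norm_bounded hA fun m => term_norm_le A ν hj m hx

private lemma gSer_hasDerivAt (A : ℕ → ℂ) (ν : ℕ)
    (hA : Summable fun n : ℕ => ‖A (n + 1)‖ * ((n : ℝ) + 1) ^ ν) {j : ℕ} (hj : j < ν)
    {x : ℝ} (hx : x ∈ Set.Ioi (0 : ℝ)) :
    HasDerivAt (gSer A j) (gSer A (j + 1) x) x := by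
  exact hasDerivAt_tsum_of_isPreconnected hA isOpen_Ioi isPreconnected_Ioi
    (fun m y _ => term_hasDerivAt A j m y)
    (fun m y hy => term_norm_le A ν hj m (le_of_lt hy))
    (Set.mem_Ioi.mpr one_pos) (term_summable A ν hA hj.le zero_le_one) hx

private lemma gSer_iter (A : ℕ → ℂ) (ν : ℕ)
    (hA : Summable fun n : ℕ => ‖A (n + 1)‖ * ((n : ℝ) + 1) ^ ν) :
    ∀ j, j ≤ ν → ∀ x ∈ Set.Ioi (0 : ℝ),
      iteratedDerivWithin j (gSer A 0) (Set.Ioi 0) x = gSer A j x := by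
  intro j
  induction j with
  | zero => intro _ x _; simp [iteratedDerivWithin_zero]
  | succ j ih =>
    intro hj x hx
    have hxu : UniqueDiffWithinAt ℝ (Set.Ioi (0 : ℝ)) x := (uniqueDiffOn_Ioi 0) x hx
    rw [iteratedDerivWithin_succ]
    have heq : Set.EqOn (iteratedDerivWithin j (gSer A 0) (Set.Ioi 0)) (gSer A j)
        (Set.Ioi 0) := fun y hy => ih (by omega) y hy
    rw [derivWithin_of_isOpen isOpen_Ioi hx]
    have hev : iteratedDerivWithin j (gSer A 0) (Set.Ioi 0) =ᶠ[nhds x] gSer A j :=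
      Filter.eventuallyEq_of_mem (isOpen_Ioi.mem_nhds hx) heq
    rw [hev.deriv_eq]
    exact (gSer_hasDerivAt A ν hA (by omega) hx).deriv

private lemma gSer_contDiff (A : ℕ → ℂ) (ν : ℕ)
    (hA : Summable fun n : ℕ => ‖A (n + 1)‖ * ((n : ℝ) + 1) ^ ν) :
    ∀ i j, i + j ≤ ν → ContDiffOn ℝ i (gSer A j) (Set.Ioi 0) := by
  intro i
  induction i with
  | zero =>
    intro j hj
    rw [Nat.cast_zero, contDiffOn_zero]
    apply continuousOn_tsum (u := fun m => ‖A (m + 1)‖ * ((m : ℝ) + 1) ^ ν)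
    · intro m
      apply Continuous.continuousOn
      exact continuous_const.mul (Complex.continuous_exp.comp
        (continuous_const.mul Complex.continuous_ofReal))
    · exact hA
    · intro m x hx
      exact term_norm_le A ν (by omega) m (le_of_lt hx)
  | succ i ih =>
    intro j hj
    have hcast : ((i + 1 : ℕ) : WithTop ℕ∞) = (i : ℕ) + 1 := by push_cast; rfl
    rw [hcast, contDiffOn_succ_iff_derivWithin (uniqueDiffOn_Ioi 0)]
    refine ⟨?_, ?_, ?_⟩
    · intro y hy
      exact (gSer_hasDerivAt A ν hA (show j < ν by omega) hy).differentiableAt.differentiableWithinAt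
    · intro h
      simp at h
    · refine (ih (j + 1) (by omega)).congr fun y hy => ?_
      rw [derivWithin_of_isOpen isOpen_Ioi hy]
      exact (gSer_hasDerivAt A ν hA (show j < ν by omega) hy).deriv

/-! ### The key identity -/

private lemma key_eq (A : ℕ → ℂ) (ν : ℕ)
    (hA : Summable fun n : ℕ => ‖A (n + 1)‖ * ((n : ℝ) + 1) ^ ν)
    (h : ℕ → ℂ) (hbound : ∀ m : ℕ, 1 ≤ m → ‖h m‖ ≤ ‖A m‖ * (m : ℝ) ^ ν)
    {x : ℝ} (hx : 0 < x) :
    ∑' n : ℕ,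
        (∑ d ∈ Nat.divisors (n + 1),
          h d * ((ArithmeticFunction.moebius ((n + 1) / d) : ℤ) : ℂ)) /
        (Complex.exp (((n : ℝ) + 1) * x) - 1)
      = ∑' m : ℕ, h (m + 1) * ((Real.exp (-x) : ℝ) : ℂ) ^ (m + 1) := by
  set t : ℝ := Real.exp (-x) with htdef
  have ht0 : 0 < t := Real.exp_pos _
  have ht1 : t < 1 := by
    have h' := Real.exp_lt_exp.mpr (show -x < 0 by linarith)
    rwa [Real.exp_zero] at h'
  set B : ℕ → ℝ := fun d => ‖A d‖ * (d : ℝ) ^ ν with hBdef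
  have hBsum : Summable fun n : ℕ => B (n + 1) * t ^ (n + 1) := by
    refine Summable.of_nonneg_of_le (fun n => by positivity) (fun n => ?_) hA
    have hc : ((n + 1 : ℕ) : ℝ) = (n : ℝ) + 1 := by push_cast; ring
    have htle : t ^ (n + 1) ≤ 1 := pow_le_one₀ ht0.le ht1.le
    calc B (n + 1) * t ^ (n + 1) ≤ B (n + 1) * 1 :=
          mul_le_mul_of_nonneg_left htle (by positivity)
      _ = ‖A (n + 1)‖ * ((n : ℝ) + 1) ^ ν := by
          simp only [hBdef, mul_one]
          rw [hc]
  have hdivsum : Summable fun m : ℕ => (∑ d ∈ (m + 1).divisors, B d) * t ^ (m + 1) :=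
    (hasSum_divisors B t (summable_F_real ht0 ht1 B hBsum)).summable
  set D : ℕ → ℂ := fun k =>
    ∑ e ∈ k.divisors, h e * ((ArithmeticFunction.moebius (k / e) : ℤ) : ℂ) with hDdef
  have hDle : ∀ n : ℕ, ‖D (n + 1)‖ ≤ ∑ d ∈ (n + 1).divisors, B d := by
    intro n
    refine (norm_sum_le _ _).trans (Finset.sum_le_sum fun d hd => ?_)
    have hd1 : 1 ≤ d := Nat.pos_of_mem_divisors hd
    rw [norm_mul]
    have hmu : ‖((ArithmeticFunction.moebius ((n + 1) / d) : ℤ) : ℂ)‖ ≤ 1 := by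
      rw [Complex.norm_intCast]
      exact_mod_cast ArithmeticFunction.abs_moebius_le_one
    calc ‖h d‖ * ‖((ArithmeticFunction.moebius ((n + 1) / d) : ℤ) : ℂ)‖
        ≤ (‖A d‖ * (d : ℝ) ^ ν) * 1 :=
          mul_le_mul (hbound d hd1) hmu (norm_nonneg _) (by positivity)
      _ = B d := mul_one _
  have hD : Summable fun n : ℕ => ‖D (n + 1)‖ * t ^ (n + 1) := by
    refine Summable.of_nonneg_of_le (fun n => by positivity) (fun n => ?_) hdivsum
    exact mul_le_mul_of_nonneg_right (hDle n) (by positivity)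
  calc ∑' n : ℕ, D (n + 1) / (Complex.exp (((n : ℝ) + 1) * x) - 1)
      = ∑' n : ℕ, D (n + 1) * (t : ℂ) ^ (n + 1) / (1 - (t : ℂ) ^ (n + 1)) :=
        tsum_congr fun n => term_eq _ n hx
    _ = ∑' m : ℕ, (∑ d ∈ (m + 1).divisors, D d) * (t : ℂ) ^ (m + 1) :=
        lambert_eq ht0 ht1 D hD
    _ = ∑' m : ℕ, h (m + 1) * (t : ℂ) ^ (m + 1) :=
        tsum_congr fun m => by rw [hDdef, moebius_inv_sum h (m + 1) (Nat.succ_pos m)]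

theorem stmt1 (A : ℕ → ℂ) (ν : ℕ) (hν : 0 < ν)
    (hA : Summable fun n : ℕ => ‖A (n + 1)‖ * ((n : ℝ) + 1) ^ ν)
    (f : ℝ → ℂ)
    (hf : ∀ x : ℝ, f x =
      ∑' n : ℕ,
        (∑ d ∈ Nat.divisors (n + 1),
            A d * ((ArithmeticFunction.moebius ((n + 1) / d) : ℤ) : ℂ)) /
          (Complex.exp (((n : ℝ) + 1) * x) - 1)) :
    ContDiffOn ℝ ν f (Set.Ioi (0 : ℝ)) ∧
    ∀ x : ℝ, 0 < x →
      iteratedDerivWithin ν f (Set.Ioi (0 : ℝ)) x =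
        ∑' n : ℕ,
          (∑ d ∈ Nat.divisors (n + 1),
              A d * (-(d : ℂ)) ^ ν * ((ArithmeticFunction.moebius ((n + 1) / d) : ℤ) : ℂ)) /
            (Complex.exp (((n : ℝ) + 1) * x) - 1) := by
  have hboundA : ∀ m : ℕ, 1 ≤ m → ‖A m‖ ≤ ‖A m‖ * (m : ℝ) ^ ν := by
    intro m hm
    have h1 : (1 : ℝ) ≤ (m : ℝ) ^ ν := one_le_pow₀ (by exact_mod_cast hm)
    nlinarith [norm_nonneg (A m)]
  have hboundA' : ∀ m : ℕ, 1 ≤ m → ‖A m * (-(m : ℂ)) ^ ν‖ ≤ ‖A m‖ * (m : ℝ) ^ ν := by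
    intro m hm
    rw [norm_mul, norm_pow, norm_neg, Complex.norm_natCast]
  have hpow : ∀ (m : ℕ) (x : ℝ), ((Real.exp (-x) : ℝ) : ℂ) ^ (m + 1)
      = Complex.exp (-((m : ℂ) + 1) * x) := by
    intro m x
    rw [Complex.ofReal_exp, ← Complex.exp_nat_mul]
    congr 1
    push_cast
    ring
  have hfg : Set.EqOn f (gSer A 0) (Set.Ioi 0) := by
    intro x hx
    rw [hf x, key_eq A ν hA A hboundA hx]
    exact tsum_congr fun m => by rw [hpow m x, pow_zero, mul_one]
  constructor
  · exact (gSer_contDiff A ν hA ν 0 (by omega)).congr hfg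
  · intro x hx
    have h1 : iteratedDerivWithin ν f (Set.Ioi 0) x
        = iteratedDerivWithin ν (gSer A 0) (Set.Ioi 0) x :=
      iteratedDerivWithin_congr hfg hx
    rw [h1, gSer_iter A ν hA ν le_rfl x hx]
    calc gSer A ν x
        = ∑' m : ℕ, A (m + 1) * (-((m + 1 : ℕ) : ℂ)) ^ ν
            * ((Real.exp (-x) : ℝ) : ℂ) ^ (m + 1) := by
          refine tsum_congr fun m => ?_
          rw [hpow m x]
          push_cast
          ring
      _ = ∑' n : ℕ,
          (∑ d ∈ Nat.divisors (n + 1),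
              A d * (-(d : ℂ)) ^ ν * ((ArithmeticFunction.moebius ((n + 1) / d) : ℤ) : ℂ)) /
            (Complex.exp (((n : ℝ) + 1) * x) - 1) :=
          (key_eq A ν hA (fun k => A k * (-(k : ℂ)) ^ ν) hboundA' hx).symm
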